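/- For every integer n ≥ 1, sqrt(2)/sqrt(n) < Γ(n/2) / Γ((n+1)/2) < sqrt(2)/sqrt(n - 1/2). -/

import Mathlib

private noncomputable def vG (x : ℝ) : ℝ :=
  (x - 1/4) * (Real.Gamma x / Real.Gamma (x + 1/2)) ^ 2

private lemma gamma_midpoint {x : ℝ} (hx : 0 < x) :
    Real.Gamma (x + 1/2) ^ 2 ≤ x * Real.Gamma x ^ 2 := by
  have h := Real.convexOn_log_Gamma.2 (Set.mem_Ioi.mpr hx)
      (Set.mem_Ioi.mpr (by linarith : (0:ℝ) < x + 1))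
      (by norm_num : (0:ℝ) ≤ 1/2) (by norm_num : (0:ℝ) ≤ 1/2) (by norm_num)
  simp only [smul_eq_mul, Function.comp_apply] at h
  rw [show (1/2 : ℝ) * x + 1/2 * (x+1) = x + 1/2 by ring] at h
  have hg1 : 0 < Real.Gamma x := Real.Gamma_pos_of_pos hx
  have hg2 : 0 < Real.Gamma (x + 1/2) := Real.Gamma_pos_of_pos (by linarith)
  have hg3 : Real.Gamma (x+1) = x * Real.Gamma x := Real.Gamma_add_one hx.ne'
  have h2 : Real.log (Real.Gamma (x+1/2) ^ 2) ≤
      Real.log (x * Real.Gamma x ^ 2) := by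
    rw [Real.log_pow, show x * Real.Gamma x ^ 2 = Real.Gamma x * Real.Gamma (x+1) by
        rw [hg3]; ring,
      Real.log_mul hg1.ne' (by rw [hg3]; positivity)]
    push_cast
    linarith
  exact (Real.log_le_log_iff (by positivity) (by positivity)).mp h2

private lemma gamma_rec {x : ℝ} (hx : 0 < x) :
    Real.Gamma (x + 1) = x * Real.Gamma x := Real.Gamma_add_one hx.ne'

/-- Strict form: Γ(x+1/2)² < x·Γ(x)². -/
private lemma gamma_midpoint_strict {x : ℝ} (hx : 0 < x) :
    Real.Gamma (x + 1/2) ^ 2 < x * Real.Gamma x ^ 2 := by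
  have h := gamma_midpoint (x := x + 1) (by linarith)
  rw [show x + 1 + 1/2 = (x + 1/2) + 1 by ring,
    gamma_rec (by linarith : (0:ℝ) < x + 1/2), gamma_rec hx] at h
  have hg1 : 0 < Real.Gamma x := Real.Gamma_pos_of_pos hx
  have hg2 : 0 < Real.Gamma (x + 1/2) := Real.Gamma_pos_of_pos (by linarith)
  have hq : (0:ℝ) ≤ x^2 + x := by positivity
  have hb2 : 0 < Real.Gamma (x+1/2)^2 := by positivity
  nlinarith [hq, hb2]

/-- v is strictly increasing under x ↦ x+1. -/
private lemma vG_step {x : ℝ} (hx : 0 < x) : vG x < vG (x + 1) := by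
  have hg1 : 0 < Real.Gamma x := Real.Gamma_pos_of_pos hx
  have hg2 : 0 < Real.Gamma (x + 1/2) := Real.Gamma_pos_of_pos (by linarith)
  have e1 : Real.Gamma (x + 1) = x * Real.Gamma x := gamma_rec hx
  have e2 : Real.Gamma (x + 1 + 1/2) = (x + 1/2) * Real.Gamma (x + 1/2) := by
    rw [show x + 1 + 1/2 = (x + 1/2) + 1 by ring]
    exact gamma_rec (by linarith)
  unfold vG
  rw [e1, e2]
  have key : ((x * Real.Gamma x) / ((x + 1/2) * Real.Gamma (x + 1/2))) ^ 2
      = (x/(x+1/2))^2 * (Real.Gamma x / Real.Gamma (x + 1/2)) ^ 2 := by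
    rw [mul_div_mul_comm, mul_pow]
  rw [key]
  have hg : 0 < (Real.Gamma x / Real.Gamma (x + 1/2)) ^ 2 := by positivity
  have h2 : (0:ℝ) < (x+1/2)^2 := by positivity
  have e3 : (x/(x+1/2))^2 * (x+1/2)^2 = x^2 := by
    rw [div_pow, div_mul_cancel₀ _ (by positivity : ((x+1/2):ℝ)^2 ≠ 0)]
  have halg : (x - 1/4) < (x + 1 - 1/4) * (x/(x+1/2))^2 := by nlinarith
  have := mul_lt_mul_of_pos_right halg hg
  nlinarith [this]

/-- v(y) ≤ 1 + 1/(4y). -/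
private lemma vG_bound {y : ℝ} (hy : 0 < y) : vG y ≤ 1 + 1/(4*y) := by
  have h := gamma_midpoint (x := y + 1/2) (by linarith)
  rw [show y + 1/2 + 1/2 = y + 1 by ring, gamma_rec hy] at h
  -- h : (y * Γ y)^2 ≤ (y+1/2) * Γ(y+1/2)^2
  have hg1 : 0 < Real.Gamma y := Real.Gamma_pos_of_pos hy
  have hg2 : 0 < Real.Gamma (y + 1/2) := Real.Gamma_pos_of_pos (by linarith)
  unfold vG
  rw [div_pow]
  have hgsq : Real.Gamma y ^ 2 / Real.Gamma (y + 1/2) ^ 2 ≤ (y + 1/2) / y^2 := by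
    rw [div_le_div_iff₀ (by positivity) (by positivity)]
    nlinarith
  have h0 : (0:ℝ) ≤ Real.Gamma y ^ 2 / Real.Gamma (y + 1/2) ^ 2 := by positivity
  rcases le_or_gt (y - 1/4) 0 with hc | hc
  · have : (y - 1/4) * (Real.Gamma y ^ 2 / Real.Gamma (y + 1/2) ^ 2) ≤ 0 :=
      mul_nonpos_of_nonpos_of_nonneg hc h0
    have : (0:ℝ) < 1 + 1/(4*y) := by positivity
    linarith
  · calc (y - 1/4) * (Real.Gamma y ^ 2 / Real.Gamma (y + 1/2) ^ 2)
        ≤ (y - 1/4) * ((y + 1/2) / y^2) := by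
          exact mul_le_mul_of_nonneg_left hgsq hc.le
      _ ≤ 1 + 1/(4*y) := by
          have h4 : (0:ℝ) < y^2 := by positivity
          rw [← mul_div_assoc, div_le_iff₀ h4]
          have e5 : (1 + 1/(4*y))*y^2 = y^2 + y/4 := by field_simp
          rw [e5]
          nlinarith

private lemma vG_mono {x : ℝ} (hx : 0 < x) : ∀ k : ℕ, vG x ≤ vG (x + k)
  | 0 => by simp
  | (k+1) => by
      have h1 := vG_mono hx k
      have h2 := vG_step (x := x + k) (by positivity)
      push_cast
      rw [show x + ((k:ℝ) + 1) = (x + k) + 1 by ring]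
      linarith

private lemma vG_le_one {x : ℝ} (hx : 0 < x) : vG x ≤ 1 := by
  by_contra hcon
  push_neg at hcon
  set ε := vG x - 1 with hε
  have hεpos : 0 < ε := by rw [hε]; linarith
  obtain ⟨k, hk⟩ := exists_nat_gt (1 / (4 * ε))
  have hk0 : (0:ℝ) < k := lt_trans (by positivity) hk
  have h1 : vG x ≤ vG (x + k) := vG_mono hx k
  have h2 : vG (x + k) ≤ 1 + 1/(4*(x + k)) := vG_bound (by positivity)
  have h3 : 1/(4*(x + k)) < ε := by
    rw [div_lt_iff₀ (by positivity)]
    rw [div_lt_iff₀ (by positivity)] at hk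
    nlinarith [mul_pos hεpos hx]
  linarith

private lemma vG_lt_one {x : ℝ} (hx : 0 < x) : vG x < 1 :=
  lt_of_lt_of_le (vG_step hx) (vG_le_one (by linarith))

theorem stmt_10 (n : ℕ) (hn : 1 ≤ n) :
    Real.sqrt 2 / Real.sqrt n < Real.Gamma (n / 2) / Real.Gamma ((n + 1) / 2) ∧
    Real.Gamma (n / 2) / Real.Gamma ((n + 1) / 2) < Real.sqrt 2 / Real.sqrt (n - 1 / 2) := by
  have hn1 : (1:ℝ) ≤ (n:ℝ) := by exact_mod_cast hn
  set x : ℝ := (n:ℝ) / 2 with hxdef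
  have hx : 0 < x := by positivity
  have hE : ((n:ℝ) + 1) / 2 = x + 1/2 := by rw [hxdef]; ring
  have hg1 : 0 < Real.Gamma x := Real.Gamma_pos_of_pos hx
  have hg2 : 0 < Real.Gamma (x + 1/2) := Real.Gamma_pos_of_pos (by linarith)
  have hgq : 0 < Real.Gamma x / Real.Gamma (x + 1/2) := by positivity
  constructor
  · -- lower bound
    rw [hE, ← Real.sqrt_div (by norm_num : (0:ℝ) ≤ 2)]
    rw [Real.sqrt_lt' hgq]
    have h := gamma_midpoint_strict hx
    rw [div_lt_iff₀ (by positivity : (0:ℝ) < (n:ℝ)), div_pow,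
      div_mul_eq_mul_div, lt_div_iff₀ (by positivity)]
    have : x = (n:ℝ)/2 := hxdef
    nlinarith
  · -- upper bound
    have hv := vG_lt_one hx
    unfold vG at hv
    rw [hE, ← Real.sqrt_div (by norm_num : (0:ℝ) ≤ 2)]
    rw [Real.lt_sqrt hgq.le]
    have hden : (0:ℝ) < (n:ℝ) - 1/2 := by linarith
    rw [lt_div_iff₀ hden]
    have hx14 : x - 1/4 = ((n:ℝ) - 1/2) / 2 := by rw [hxdef]; ring
    rw [hx14] at hv
    nlinarith [sq_nonneg (Real.Gamma x / Real.Gamma (x + 1/2))]
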